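/- Let θ ∈ (3/2, 2], let U be uniform on [0, ln 2], and define Y = 2/(θ·e^U) for U ∈ [0, ln(2/θ)], Y = 3/(θ·e^U) for U ∈ (ln(2/θ), ln(3/θ)], and Y = 4/(θ·e^U) for U ∈ (ln(3/θ), ln 2]. Then E[Y] = 5/(6·ln 2). -/

import Mathlib

open MeasureTheory intervalIntegral Real

lemma int_exp_neg (x y : ℝ) : ∫ u in x..y, Real.exp (-u) = Real.exp (-x) - Real.exp (-y) := by
  have h : ∀ u : ℝ, HasDerivAt (fun v => -Real.exp (-v)) (Real.exp (-u)) u := by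
    intro u
    have := ((Real.hasDerivAt_exp (-u)).comp u (hasDerivAt_neg u)).neg
    exact (by simpa using this : HasDerivAt (-Real.exp ∘ Neg.neg) (Real.exp (-u)) u)
  rw [intervalIntegral.integral_eq_sub_of_hasDerivAt (fun u _ => h u)
      ((Real.continuous_exp.comp continuous_neg).intervalIntegrable x y)]
  ring

lemma int_c (c θ x y : ℝ) (hθ : θ ≠ 0) :
    ∫ u in x..y, c / (θ * Real.exp u) = (c / θ) * (Real.exp (-x) - Real.exp (-y)) := by
  have : ∀ u : ℝ, c / (θ * Real.exp u) = (c / θ) * Real.exp (-u) := by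
    intro u
    rw [Real.exp_neg]
    field_simp
  simp_rw [this]
  rw [intervalIntegral.integral_const_mul, int_exp_neg]

theorem stmt_16 (θ : ℝ) (hθ : θ ∈ Set.Ioc (3 / 2 : ℝ) 2) :
    (∫ u in (0:ℝ)..(Real.log 2),
        if u ≤ Real.log (2 / θ) then 2 / (θ * Real.exp u)
        else if u ≤ Real.log (3 / θ) then 3 / (θ * Real.exp u)
        else 4 / (θ * Real.exp u)) / Real.log 2 =
      5 / (6 * Real.log 2) := by
  obtain ⟨hθ1, hθ2⟩ := hθ
  have hθ0 : (0:ℝ) < θ := by linarith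
  set a := Real.log (2 / θ) with ha_def
  set b := Real.log (3 / θ) with hb_def
  set L := Real.log 2 with hL_def
  have h2θ : (0:ℝ) < 2 / θ := by positivity
  have h3θ : (0:ℝ) < 3 / θ := by positivity
  have h0a : 0 ≤ a := Real.log_nonneg (by rw [le_div_iff₀ hθ0]; linarith)
  have hab : a ≤ b := Real.log_le_log h2θ (by gcongr <;> norm_num)
  have hbL : b ≤ L := Real.log_le_log h3θ (by rw [div_le_iff₀ hθ0]; linarith)
  have hea : Real.exp (-a) = θ / 2 := by
    rw [Real.exp_neg, Real.exp_log h2θ, inv_div]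
  have heb : Real.exp (-b) = θ / 3 := by
    rw [Real.exp_neg, Real.exp_log h3θ, inv_div]
  have heL : Real.exp (-L) = 1 / 2 := by
    rw [Real.exp_neg, Real.exp_log (by norm_num : (0:ℝ) < 2), one_div]
  set f : ℝ → ℝ := fun u =>
    if u ≤ a then 2 / (θ * Real.exp u)
    else if u ≤ b then 3 / (θ * Real.exp u)
    else 4 / (θ * Real.exp u) with hf
  have hcont : ∀ c : ℝ, Continuous (fun u : ℝ => c / (θ * Real.exp u)) := by
    intro c
    apply Continuous.div continuous_const (continuous_const.mul Real.continuous_exp)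
    intro u
    exact mul_ne_zero hθ0.ne' (Real.exp_pos u).ne'
  have hI1 : IntervalIntegrable f volume 0 a := by
    refine ((hcont 2).intervalIntegrable 0 a).congr ?_
    intro u hu
    rw [Set.uIoc_of_le h0a] at hu
    simp [hf, hu.2]
  have hI2 : IntervalIntegrable f volume a b := by
    refine ((hcont 3).intervalIntegrable a b).congr ?_
    intro u hu
    rw [Set.uIoc_of_le hab] at hu
    simp [hf, hu.2, not_le.mpr hu.1]
  have hI3 : IntervalIntegrable f volume b L := by
    refine ((hcont 4).intervalIntegrable b L).congr ?_
    intro u hu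
    rw [Set.uIoc_of_le hbL] at hu
    have h1 : ¬ u ≤ a := not_le.mpr (lt_of_le_of_lt hab hu.1)
    have h2 : ¬ u ≤ b := not_le.mpr hu.1
    simp [hf, h1, h2]
  have hsplit : ∫ u in (0:ℝ)..L, f u =
      (∫ u in (0:ℝ)..a, f u) + (∫ u in a..b, f u) + (∫ u in b..L, f u) := by
    rw [intervalIntegral.integral_add_adjacent_intervals hI1 hI2,
        intervalIntegral.integral_add_adjacent_intervals (hI1.trans hI2) hI3]
  have e1 : ∫ u in (0:ℝ)..a, f u = (2 / θ) * (Real.exp (-0) - Real.exp (-a)) := by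
    rw [show (∫ u in (0:ℝ)..a, f u) = ∫ u in (0:ℝ)..a, 2 / (θ * Real.exp u) from ?_,
        int_c _ _ _ _ hθ0.ne']
    apply intervalIntegral.integral_congr
    intro u hu
    rw [Set.uIcc_of_le h0a] at hu
    simp [hf, hu.2]
  have e2 : ∫ u in a..b, f u = (3 / θ) * (Real.exp (-a) - Real.exp (-b)) := by
    rw [show (∫ u in a..b, f u) = ∫ u in a..b, 3 / (θ * Real.exp u) from ?_,
        int_c _ _ _ _ hθ0.ne']
    apply intervalIntegral.integral_congr_ae
    filter_upwards [] with u
    intro hu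
    rw [Set.uIoc_of_le hab] at hu
    simp [hf, hu.2, not_le.mpr hu.1]
  have e3 : ∫ u in b..L, f u = (4 / θ) * (Real.exp (-b) - Real.exp (-L)) := by
    rw [show (∫ u in b..L, f u) = ∫ u in b..L, 4 / (θ * Real.exp u) from ?_,
        int_c _ _ _ _ hθ0.ne']
    apply intervalIntegral.integral_congr_ae
    filter_upwards [] with u
    intro hu
    rw [Set.uIoc_of_le hbL] at hu
    have h1 : ¬ u ≤ a := not_le.mpr (lt_of_le_of_lt hab hu.1)
    simp [hf, h1, not_le.mpr hu.1]
  have hval : ∫ u in (0:ℝ)..L, f u = 5 / 6 := by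
    rw [hsplit, e1, e2, e3, hea, heb, heL]
    simp only [neg_zero, Real.exp_zero]
    field_simp
    ring
  have hL0 : L ≠ 0 := by
    rw [hL_def]
    exact Real.log_ne_zero_of_pos_of_ne_one (by norm_num) (by norm_num)
  rw [show (∫ u in (0:ℝ)..(Real.log 2),
        if u ≤ Real.log (2 / θ) then 2 / (θ * Real.exp u)
        else if u ≤ Real.log (3 / θ) then 3 / (θ * Real.exp u)
        else 4 / (θ * Real.exp u)) = ∫ u in (0:ℝ)..L, f u from rfl, hval]
  field_simp
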